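/- With F, G, Φ_h as above, there exists C > 0 such that for all u₁, u₂ ∈ B_r(0) and all h > 0 sufficiently small, |Φ_h(u₂) − Φ_h(u₁) − (u₂ − u₁)| ≤ C·h·γ·|u₂ − u₁|, where γ = ‖G‖_{W^{1,∞}(B_r(0))}. -/

import Mathlib

open Metric Set

section helpers
variable {E : Type*} [NormedAddCommGroup E] [NormedSpace ℝ E]

/-- Second-difference mean value estimate along two parallel segments. -/
lemma seg_est {F : E → E} {f' : E → E →L[ℝ] E} {s : Set E} (hs : Convex ℝ s)
    (hd : ∀ x ∈ s, HasFDerivAt F (f' x) x)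
    {K : ℝ} (hK0 : 0 ≤ K)
    (hK : ∀ x ∈ s, ∀ y ∈ s, ‖f' x - f' y‖ ≤ K * ‖x - y‖)
    {u₁ u₂ w₁ w₂ : E} (h1 : u₁ ∈ s) (h2 : u₂ ∈ s) (h1' : u₁ + w₁ ∈ s) (h2' : u₂ + w₂ ∈ s)
    {δ : ℝ} (hw1 : ‖w₁‖ ≤ δ) (hw2 : ‖w₂‖ ≤ δ) :
    ‖F (u₂ + w₂) - F (u₁ + w₁) - (F u₂ - F u₁) - f' u₂ (w₂ - w₁)‖ ≤
      K * δ * ‖w₂ - w₁‖ + K * δ * (‖u₂ - u₁‖ + ‖w₂ - w₁‖) := by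
  have hδ : 0 ≤ δ := le_trans (norm_nonneg _) hw1
  set c := f' u₂ (w₂ - w₁) with hc
  set φ : ℝ → E := fun t => F (u₂ + t • w₂) - F (u₁ + t • w₁) - t • c with hφ
  have mem : ∀ u w : E, u ∈ s → u + w ∈ s → ∀ t ∈ Icc (0:ℝ) 1, u + t • w ∈ s := by
    intro u w hu huw t ht
    have := hs.segment_subset hu huw
      (by rw [segment_eq_image']; exact ⟨t, ht, rfl⟩)
    simpa using this
  set D : ℝ → E := fun t => f' (u₂ + t • w₂) w₂ - f' (u₁ + t • w₁) w₁ - c with hD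
  have hder : ∀ t ∈ Icc (0:ℝ) 1, HasDerivWithinAt φ (D t) (Icc 0 1) t := by
    intro t ht
    have d2 : HasDerivAt (fun t : ℝ => F (u₂ + t • w₂)) (f' (u₂ + t • w₂) w₂) t := by
      have lin : HasDerivAt (fun t : ℝ => u₂ + t • w₂) w₂ t := by
        simpa using ((hasDerivAt_id t).smul_const w₂).const_add u₂
      exact (hd _ (mem u₂ w₂ h2 h2' t ht)).comp_hasDerivAt t lin
    have d1 : HasDerivAt (fun t : ℝ => F (u₁ + t • w₁)) (f' (u₁ + t • w₁) w₁) t := by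
      have lin : HasDerivAt (fun t : ℝ => u₁ + t • w₁) w₁ t := by
        simpa using ((hasDerivAt_id t).smul_const w₁).const_add u₁
      exact (hd _ (mem u₁ w₁ h1 h1' t ht)).comp_hasDerivAt t lin
    have d3 : HasDerivAt (fun t : ℝ => t • c) c t := by
      simpa using (hasDerivAt_id t).smul_const c
    exact ((d2.sub d1).sub d3).hasDerivWithinAt
  have bound : ∀ t ∈ Ico (0:ℝ) 1, ‖D t‖ ≤
      K * δ * ‖w₂ - w₁‖ + K * δ * (‖u₂ - u₁‖ + ‖w₂ - w₁‖) := by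
    intro t ht
    have ht0 : 0 ≤ t := ht.1
    have ht1 : t ≤ 1 := le_of_lt ht.2
    have htIcc : t ∈ Icc (0:ℝ) 1 := ⟨ht0, ht1⟩
    have hsplit : D t = (f' (u₂ + t • w₂) - f' u₂) (w₂ - w₁)
        + (f' (u₂ + t • w₂) - f' (u₁ + t • w₁)) w₁ := by
      simp only [hD, hc, ContinuousLinearMap.sub_apply, map_sub]
      abel
    rw [hsplit]
    have e1 : ‖(f' (u₂ + t • w₂) - f' u₂) (w₂ - w₁)‖ ≤ K * δ * ‖w₂ - w₁‖ := by
      refine le_trans (ContinuousLinearMap.le_opNorm _ _) ?_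
      refine mul_le_mul_of_nonneg_right ?_ (norm_nonneg _)
      refine le_trans (hK _ (mem u₂ w₂ h2 h2' t htIcc) _ h2) ?_
      have : ‖u₂ + t • w₂ - u₂‖ = t * ‖w₂‖ := by
        simp [norm_smul, abs_of_nonneg ht0]
      rw [this]
      have : t * ‖w₂‖ ≤ δ := le_trans
        (mul_le_of_le_one_left (norm_nonneg _) ht1) hw2
      exact mul_le_mul_of_nonneg_left this hK0
    have e2 : ‖(f' (u₂ + t • w₂) - f' (u₁ + t • w₁)) w₁‖ ≤
        K * δ * (‖u₂ - u₁‖ + ‖w₂ - w₁‖) := by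
      refine le_trans (ContinuousLinearMap.le_opNorm _ _) ?_
      have hdist : ‖u₂ + t • w₂ - (u₁ + t • w₁)‖ ≤ ‖u₂ - u₁‖ + ‖w₂ - w₁‖ := by
        have : u₂ + t • w₂ - (u₁ + t • w₁) = (u₂ - u₁) + t • (w₂ - w₁) := by
          rw [smul_sub]; abel
        rw [this]
        refine le_trans (norm_add_le _ _) ?_
        refine add_le_add le_rfl ?_
        rw [norm_smul, Real.norm_eq_abs, abs_of_nonneg ht0]
        exact mul_le_of_le_one_left (norm_nonneg _) ht1
      have hA : ‖f' (u₂ + t • w₂) - f' (u₁ + t • w₁)‖ ≤ K * (‖u₂ - u₁‖ + ‖w₂ - w₁‖) :=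
        le_trans (hK _ (mem u₂ w₂ h2 h2' t htIcc) _ (mem u₁ w₁ h1 h1' t htIcc))
          (mul_le_mul_of_nonneg_left hdist hK0)
      calc ‖f' (u₂ + t • w₂) - f' (u₁ + t • w₁)‖ * ‖w₁‖
          ≤ (K * (‖u₂ - u₁‖ + ‖w₂ - w₁‖)) * δ := by
            exact mul_le_mul hA hw1 (norm_nonneg _)
              (by positivity)
        _ = K * δ * (‖u₂ - u₁‖ + ‖w₂ - w₁‖) := by ring
    exact le_trans (norm_add_le _ _) (add_le_add e1 e2)
  have key := norm_image_sub_le_of_norm_deriv_le_segment' hder bound 1 (by norm_num)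
  have hφ1 : φ 1 = F (u₂ + w₂) - F (u₁ + w₁) - c := by simp [hφ]
  have hφ0 : φ 0 = F u₂ - F u₁ := by simp [hφ]
  rw [hφ1, hφ0] at key
  have : F (u₂ + w₂) - F (u₁ + w₁) - c - (F u₂ - F u₁)
      = F (u₂ + w₂) - F (u₁ + w₁) - (F u₂ - F u₁) - c := by abel
  rw [this] at key
  simpa using key

lemma lower_bd {F : E → E} {f' : E → E →L[ℝ] E} {s : Set E}
    (hs : Convex ℝ s) (hsc : IsCompact s)
    (hd : ∀ x ∈ s, HasFDerivAt F (f' x) x)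
    (hFc : ContinuousOn F s)
    (hinj : Set.InjOn F s)
    {K M R : ℝ} (hK0 : 0 ≤ K) (hM : 0 < M)
    (hK : ∀ x ∈ s, ∀ y ∈ s, ‖f' x - f' y‖ ≤ K * ‖x - y‖)
    (hMinv : ∀ x ∈ s, ∀ v : E, ‖v‖ ≤ M * ‖f' x v‖)
    (hR : ∀ x ∈ s, ∀ y ∈ s, ‖x - y‖ ≤ R) :
    ∃ m > 0, ∀ x ∈ s, ∀ y ∈ s, m * ‖x - y‖ ≤ ‖F x - F y‖ := by
  have hMne : M ≠ 0 := hM.ne'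
  set ε : ℝ := 1 / (4 * M * (K + 1)) with hε
  have hεpos : 0 < ε := by positivity
  -- near-diagonal estimate
  have near : ∀ x ∈ s, ∀ y ∈ s, ‖x - y‖ ≤ ε → (1 / (2 * M)) * ‖x - y‖ ≤ ‖F x - F y‖ := by
    intro x hx y hy hxy
    have hkey := seg_est hs hd hK0 hK hx hx (by simpa using hx)
      (by simpa using hy) (δ := ‖y - x‖) (by simp) (by simp [norm_sub_rev])
      (w₁ := 0) (w₂ := y - x)
    simp only [add_zero, add_sub_cancel, sub_zero, sub_self, norm_zero, add_zero] at hkey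
    have hlin : ‖y - x‖ ≤ M * ‖f' x (y - x)‖ := hMinv x hx _
    have htri : ‖f' x (y - x)‖ ≤ ‖F y - F x‖ + 2 * K * ‖y - x‖ * ‖y - x‖ := by
      have e : f' x (y - x) = (F y - F x) - (F y - F x - f' x (y - x)) := by abel
      rw [e]
      refine le_trans (norm_sub_le _ _) (add_le_add le_rfl ?_)
      refine le_trans ?_ (le_of_eq (by ring :
        K * ‖y - x‖ * ‖y - x‖ + K * ‖y - x‖ * ‖y - x‖ = 2 * K * ‖y - x‖ * ‖y - x‖))
      simpa using hkey
    have habs : 2 * K * ‖y - x‖ ≤ 1 / (2 * M) := by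
      have h1 : 2 * K * ‖y - x‖ ≤ 2 * K * ε :=
        mul_le_mul_of_nonneg_left (by simpa [norm_sub_rev] using hxy) (by positivity)
      refine le_trans h1 ?_
      rw [hε, mul_one_div, div_le_div_iff₀ (by positivity) (by positivity)]
      nlinarith [hM, hK0]
    have key2 : ‖y - x‖ ≤ M * ‖F y - F x‖ + (1/2) * ‖y - x‖ := by
      have h3 : 2 * K * ‖y - x‖ * ‖y - x‖ ≤ (1 / (2 * M)) * ‖y - x‖ :=
        mul_le_mul_of_nonneg_right habs (norm_nonneg _)
      calc ‖y - x‖ ≤ M * ‖f' x (y - x)‖ := hlin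
        _ ≤ M * (‖F y - F x‖ + (1 / (2 * M)) * ‖y - x‖) :=
            mul_le_mul_of_nonneg_left (le_trans htri (add_le_add le_rfl h3)) hM.le
        _ = M * ‖F y - F x‖ + (1/2) * ‖y - x‖ := by field_simp
    have key3 : (1/2) * ‖y - x‖ ≤ M * ‖F y - F x‖ := by linarith
    rw [norm_sub_rev x y, norm_sub_rev (F x)]
    rw [div_mul_eq_mul_div, div_le_iff₀ (by positivity)]
    linarith
  -- far case
  by_cases hT : ∃ p : E × E, p ∈ (s ×ˢ s) ∩ {p : E × E | ε ≤ ‖p.1 - p.2‖}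
  · set T : Set (E × E) := (s ×ˢ s) ∩ {p : E × E | ε ≤ ‖p.1 - p.2‖} with hTdef
    have hTc : IsCompact T := by
      refine (hsc.prod hsc).inter_right ?_
      have : IsClosed {p : E × E | ε ≤ ‖p.1 - p.2‖} := by
        have : Continuous fun p : E × E => ‖p.1 - p.2‖ :=
          (continuous_fst.sub continuous_snd).norm
        exact isClosed_le continuous_const this
      exact this
    have hgc : ContinuousOn (fun p : E × E => ‖F p.1 - F p.2‖) T := by
      refine ContinuousOn.norm ?_
      refine ContinuousOn.sub ?_ ?_
      · exact hFc.comp continuous_fst.continuousOn fun p hp => hp.1.1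
      · exact hFc.comp continuous_snd.continuousOn fun p hp => hp.1.2
    obtain ⟨p₀, hp₀T, hp₀min⟩ := hTc.exists_isMinOn hT hgc
    set g₀ : ℝ := ‖F p₀.1 - F p₀.2‖ with hg₀
    have hg₀pos : 0 < g₀ := by
      rw [hg₀, norm_pos_iff, sub_ne_zero]
      intro hFeq
      have hne : p₀.1 ≠ p₀.2 := by
        intro hcontra
        have h2 := hp₀T.2
        simp only [mem_setOf_eq, hcontra, sub_self, norm_zero] at h2
        linarith [hεpos]
      exact hne (hinj hp₀T.1.1 hp₀T.1.2 hFeq)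
    have hR' : 0 < R + 1 := by
      have := hR _ hp₀T.1.1 _ hp₀T.1.1
      have h0 : (0:ℝ) ≤ R := le_trans (norm_nonneg _) this
      linarith
    refine ⟨min (1 / (2 * M)) (g₀ / (R + 1)), lt_min (by positivity) (by positivity), ?_⟩
    intro x hx y hy
    by_cases hle : ‖x - y‖ ≤ ε
    · exact le_trans (mul_le_mul_of_nonneg_right (min_le_left _ _) (norm_nonneg _))
        (near x hx y hy hle)
    · push_neg at hle
      have hmem : (x, y) ∈ T := ⟨⟨hx, hy⟩, le_of_lt hle⟩
      have hmin : g₀ ≤ ‖F x - F y‖ := hp₀min hmem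
      refine le_trans (mul_le_mul_of_nonneg_right (min_le_right _ _) (norm_nonneg _)) ?_
      refine le_trans ?_ hmin
      rw [div_mul_eq_mul_div, div_le_iff₀ hR']
      have h1 : ‖x - y‖ ≤ R := hR x hx y hy
      nlinarith [hg₀pos, norm_nonneg (x - y)]
  · -- all pairs are near
    refine ⟨1 / (2 * M), by positivity, ?_⟩
    intro x hx y hy
    push_neg at hT
    have := hT (x, y)
    simp only [mem_inter_iff, mem_prod, mem_setOf_eq, not_and] at this
    have hnear : ‖x - y‖ ≤ ε := le_of_lt (lt_of_not_ge (this ⟨hx, hy⟩))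
    exact near x hx y hy hnear

end helpers

/-- The zero-wave map `Φ_h(u) = F⁻¹[F(u) + h·G(u)]` is a small Lipschitz perturbation of the
identity: `‖Φ_h u₂ − Φ_h u₁ − (u₂ − u₁)‖ ≤ C·h·γ·‖u₂ − u₁‖` on `B_r(0)` for small `h`,
`γ = ‖G‖_{W^{1,∞}(B_r(0))}`. -/
theorem stmt_2 (n : ℕ) (r r' γ : ℝ) (hr : 0 < r) (hrr' : r < r')
    (F G : EuclideanSpace ℝ (Fin n) → EuclideanSpace ℝ (Fin n))
    (Φ : ℝ → EuclideanSpace ℝ (Fin n) → EuclideanSpace ℝ (Fin n))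
    (DF : EuclideanSpace ℝ (Fin n) →
      (EuclideanSpace ℝ (Fin n) ≃L[ℝ] EuclideanSpace ℝ (Fin n)))
    (hF : ContDiffOn ℝ 2 F (closedBall 0 r'))
    (hDF : ∀ u ∈ closedBall (0 : EuclideanSpace ℝ (Fin n)) r',
      HasFDerivAt F (DF u : EuclideanSpace ℝ (Fin n) →L[ℝ] EuclideanSpace ℝ (Fin n)) u)
    (hFinj : Set.InjOn F (closedBall 0 r'))
    (hG : ContDiff ℝ 2 G) (hG0 : G 0 = 0)
    (hγbd : ∀ u ∈ closedBall (0 : EuclideanSpace ℝ (Fin n)) r', ‖G u‖ ≤ γ)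
    (hγlip : ∀ u ∈ closedBall (0 : EuclideanSpace ℝ (Fin n)) r',
      ∀ v ∈ closedBall (0 : EuclideanSpace ℝ (Fin n)) r', ‖G u - G v‖ ≤ γ * ‖u - v‖)
    (h₁ : ℝ) (hh₁ : 0 < h₁)
    (hΦ : ∀ h ∈ Set.Ioo (0 : ℝ) h₁, ∀ u ∈ closedBall (0 : EuclideanSpace ℝ (Fin n)) r,
      Φ h u ∈ closedBall (0 : EuclideanSpace ℝ (Fin n)) r' ∧
        F (Φ h u) = F u + h • G u) :
    ∃ C > (0 : ℝ), ∃ h₀ > (0 : ℝ), ∀ h : ℝ, 0 < h → h < h₀ →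
      ∀ u₁ ∈ closedBall (0 : EuclideanSpace ℝ (Fin n)) r,
      ∀ u₂ ∈ closedBall (0 : EuclideanSpace ℝ (Fin n)) r,
        ‖Φ h u₂ - Φ h u₁ - (u₂ - u₁)‖ ≤ C * h * γ * ‖u₂ - u₁‖ := by
  set s : Set (EuclideanSpace ℝ (Fin n)) := closedBall 0 r' with hsdef
  have hr' : 0 < r' := hr.trans hrr'
  have hsub : closedBall (0:EuclideanSpace ℝ (Fin n)) r ⊆ s := closedBall_subset_closedBall hrr'.le
  have hconv : Convex ℝ s := convex_closedBall _ _
  have hcomp : IsCompact s := isCompact_closedBall _ _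
  have hud : UniqueDiffOn ℝ s := by
    refine uniqueDiffOn_convex hconv ?_
    rw [hsdef, interior_closedBall _ hr'.ne']
    exact (nonempty_ball).2 hr'
  set f' : EuclideanSpace ℝ (Fin n) → EuclideanSpace ℝ (Fin n) →L[ℝ] EuclideanSpace ℝ (Fin n) := fun u => (DF u : EuclideanSpace ℝ (Fin n) →L[ℝ] EuclideanSpace ℝ (Fin n)) with hf'def
  have heq : ∀ x ∈ s, fderivWithin ℝ F s x = f' x := fun x hx =>
    ((hDF x hx).hasFDerivWithinAt).fderivWithin (hud x hx)
  have hg1 : ContDiffOn ℝ 1 (fderivWithin ℝ F s) s := hF.fderivWithin (m := 1) hud (by norm_num)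
  -- Lipschitz constant for f' on s
  obtain ⟨K₀, hK₀⟩ := hcomp.exists_bound_of_continuousOn
    (hg1.continuousOn_fderivWithin hud le_rfl)
  set K := max K₀ 0 with hKdef
  have hK0 : (0:ℝ) ≤ K := le_max_right _ _
  have hKlip : ∀ x ∈ s, ∀ y ∈ s, ‖f' x - f' y‖ ≤ K * ‖x - y‖ := by
    intro x hx y hy
    rw [← heq x hx, ← heq y hy]
    exact hconv.norm_image_sub_le_of_norm_fderivWithin_le
      (hg1.differentiableOn one_ne_zero)
      (fun z hz => le_trans (hK₀ z hz) (le_max_left _ _)) hy hx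
  -- bound on inverses
  have hf'c : ContinuousOn f' s :=
    (hg1.continuousOn).congr (fun x hx => (heq x hx).symm)
  have hinvc : ContinuousOn (fun x => Ring.inverse (f' x)) s := by
    intro x hx
    have h1 : ContinuousAt Ring.inverse (f' x) := NormedRing.inverse_continuousAt (DF x).toUnit
    exact h1.comp_continuousWithinAt (hf'c x hx)
  obtain ⟨M₀, hM₀⟩ := hcomp.exists_bound_of_continuousOn hinvc
  set M := max M₀ 1 with hMdef
  have hM : (0:ℝ) < M := lt_of_lt_of_le one_pos (le_max_right _ _)
  have hinveq : ∀ x : EuclideanSpace ℝ (Fin n), Ring.inverse (f' x) = ((DF x).symm : EuclideanSpace ℝ (Fin n) →L[ℝ] EuclideanSpace ℝ (Fin n)) := by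
    intro x
    have : f' x = ((DF x).toUnit : EuclideanSpace ℝ (Fin n) →L[ℝ] EuclideanSpace ℝ (Fin n)) := rfl
    rw [this, Ring.inverse_unit]
    rfl
  have hMinv : ∀ x ∈ s, ∀ v : EuclideanSpace ℝ (Fin n), ‖v‖ ≤ M * ‖f' x v‖ := by
    intro x hx v
    have h1 : v = (DF x).symm (f' x v) := by
      simp [hf'def]
    calc ‖v‖ = ‖(DF x).symm (f' x v)‖ := by rw [← h1]
      _ = ‖((DF x).symm : EuclideanSpace ℝ (Fin n) →L[ℝ] EuclideanSpace ℝ (Fin n)) (f' x v)‖ := rfl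
      _ ≤ ‖((DF x).symm : EuclideanSpace ℝ (Fin n) →L[ℝ] EuclideanSpace ℝ (Fin n))‖ * ‖f' x v‖ := ContinuousLinearMap.le_opNorm _ _
      _ ≤ M * ‖f' x v‖ := by
          refine mul_le_mul_of_nonneg_right ?_ (norm_nonneg _)
          rw [← hinveq x]
          exact le_trans (hM₀ x hx) (le_max_left _ _)
  have hRbd : ∀ x ∈ s, ∀ y ∈ s, ‖x - y‖ ≤ 2 * r' := by
    intro x hx y hy
    rw [hsdef, mem_closedBall_zero_iff] at hx hy
    calc ‖x - y‖ ≤ ‖x‖ + ‖y‖ := norm_sub_le _ _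
      _ ≤ 2 * r' := by linarith
  clear_value K M
  obtain ⟨m, hm, hlow⟩ := lower_bd hconv hcomp hDF (hF.continuousOn) hFinj hK0 hM
    hKlip hMinv hRbd
  have hmne : m ≠ 0 := hm.ne'
  -- γ ≥ 0
  have h0s : (0:EuclideanSpace ℝ (Fin n)) ∈ s := mem_closedBall_self hr'.le
  have hγ0 : (0:ℝ) ≤ γ := by
    have := hγbd 0 h0s
    rwa [hG0, norm_zero] at this
  refine ⟨2 * M * (1 + K / m), by positivity, min h₁ (m / (4 * M * K * γ + 1)),
    lt_min hh₁ (by positivity), ?_⟩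
  intro h hh0 hhh₀ u₁ hu₁ u₂ hu₂
  have hlt₁ : h < h₁ := lt_of_lt_of_le hhh₀ (min_le_left _ _)
  have hhsmall : h * (4 * M * K * γ + 1) ≤ m := by
    have h2 : h ≤ m / (4 * M * K * γ + 1) := le_of_lt (lt_of_lt_of_le hhh₀ (min_le_right _ _))
    rwa [le_div_iff₀ (by positivity)] at h2
  obtain ⟨hv₁s, hFv₁⟩ := hΦ h ⟨hh0, hlt₁⟩ u₁ hu₁
  obtain ⟨hv₂s, hFv₂⟩ := hΦ h ⟨hh0, hlt₁⟩ u₂ hu₂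
  have hu₁s : u₁ ∈ s := hsub hu₁
  have hu₂s : u₂ ∈ s := hsub hu₂
  set w₁ : EuclideanSpace ℝ (Fin n) := Φ h u₁ - u₁ with hw₁def
  set w₂ : EuclideanSpace ℝ (Fin n) := Φ h u₂ - u₂ with hw₂def
  have hadd₁ : u₁ + w₁ = Φ h u₁ := by rw [hw₁def]; abel
  have hadd₂ : u₂ + w₂ = Φ h u₂ := by rw [hw₂def]; abel
  set δ : ℝ := h * γ / m with hδdef
  clear_value δ
  have hwbd : ∀ (u : EuclideanSpace ℝ (Fin n)) (hu : u ∈ closedBall (0:EuclideanSpace ℝ (Fin n)) r) (hv : Φ h u ∈ s)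
      (hFv : F (Φ h u) = F u + h • G u), ‖Φ h u - u‖ ≤ δ := by
    intro u hu hv hFv
    have hlow' := hlow (Φ h u) hv u (hsub hu)
    have hnorm : ‖F (Φ h u) - F u‖ = h * ‖G u‖ := by
      rw [hFv]
      simp [norm_smul, abs_of_nonneg hh0.le]
    rw [hnorm] at hlow'
    have hGb : h * ‖G u‖ ≤ h * γ := mul_le_mul_of_nonneg_left (hγbd u (hsub hu)) hh0.le
    rw [hδdef, le_div_iff₀ hm]
    calc ‖Φ h u - u‖ * m = m * ‖Φ h u - u‖ := by ring
      _ ≤ h * ‖G u‖ := hlow'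
      _ ≤ h * γ := hGb
  have hw₁bd : ‖w₁‖ ≤ δ := hwbd u₁ hu₁ hv₁s hFv₁
  have hw₂bd : ‖w₂‖ ≤ δ := hwbd u₂ hu₂ hv₂s hFv₂
  have hseg := seg_est hconv hDF hK0 hKlip hu₁s hu₂s
    (by rw [hadd₁]; exact hv₁s) (by rw [hadd₂]; exact hv₂s) hw₁bd hw₂bd
  have hFdiff : F (u₂ + w₂) - F (u₁ + w₁) - (F u₂ - F u₁) = h • (G u₂ - G u₁) := by
    rw [hadd₁, hadd₂, hFv₁, hFv₂, smul_sub]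
    abel
  rw [hFdiff] at hseg
  -- main estimate
  set d := ‖w₂ - w₁‖ with hddef
  set a := ‖u₂ - u₁‖ with hadef
  have hgoalrw : ‖Φ h u₂ - Φ h u₁ - (u₂ - u₁)‖ = d := by
    rw [hddef, hw₂def, hw₁def]
    congr 1
    abel
  rw [hgoalrw]
  have hX : ‖f' u₂ (w₂ - w₁)‖ ≤ h * γ * a + (K * δ * d + K * δ * (a + d)) := by
    have e : f' u₂ (w₂ - w₁) =
        (h • (G u₂ - G u₁)) - (h • (G u₂ - G u₁) - f' u₂ (w₂ - w₁)) := by abel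
    rw [e]
    refine le_trans (norm_sub_le _ _) (add_le_add ?_ hseg)
    rw [norm_smul, Real.norm_eq_abs, abs_of_nonneg hh0.le]
    rw [mul_assoc]
    refine mul_le_mul_of_nonneg_left ?_ hh0.le
    exact hγlip u₂ hu₂s u₁ hu₁s
  have hd1 : d ≤ M * (h * γ * a + (K * δ * d + K * δ * (a + d))) :=
    le_trans (hMinv u₂ hu₂s (w₂ - w₁)) (mul_le_mul_of_nonneg_left hX hM.le)
  have hd0 : (0:ℝ) ≤ d := by rw [hddef]; exact norm_nonneg _
  have habsorb : 2 * (M * (K * δ)) ≤ 1/2 := by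
    have h2 : 2 * (M * (K * δ)) = (2 * M * K * (h * γ)) / m := by rw [hδdef]; ring
    rw [h2, div_le_iff₀ hm]
    linarith only [hhsmall, hh0.le]
  have habsorbd : 2 * (M * (K * δ)) * d ≤ (1/2) * d :=
    mul_le_mul_of_nonneg_right habsorb hd0
  have hd2 : d ≤ 2 * M * (h * γ * a) + 2 * M * (K * δ) * a := by linarith only [hd1, habsorbd]
  calc d ≤ 2 * M * (h * γ * a) + 2 * M * (K * δ) * a := hd2
    _ = 2 * M * (1 + K / m) * h * γ * a := by
        rw [hδdef]
        field_simp
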